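/- Fix integers L, T ≥ 5 and β ∈ ℝ, let Λ = (ℤ/Lℤ) × (ℤ/Tℤ) with unit shifts e₁, e₂, let q : Λ × {1,2} → ℝ, θ(n) = q(n,1) + q(n+e₁,2) − q(n+e₂,1) − q(n,2), and S_G(q) = β Σ_{n∈Λ} (1 − cos θ(n)). Define C_GG(n,μ) = 2 Σ_{m∈Λ} Σ_{ν∈{1,2}} (∂S_G/∂q(m,ν))·(∂²S_G/∂q(m,ν)∂q(n,μ)). Then for μ = 1: C_GG(n,1) = 2β²·[ (4 sin θ(n) − sin θ(n−e₂) − sin θ(n+e₁) − sin θ(n+e₂) − sin θ(n−e₁))·cos θ(n) − (4 sin θ(n−e₂) − sin θ(n) − sin θ(n−e₁−e₂) − sin θ(n−2e₂) − sin θ(n+e₁−e₂))·cos θ(n−e₂) ]. -/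

import Mathlib

/-- The plaquette angle `θ(n) = q(n,1) + q(n+e₁,2) − q(n+e₂,1) − q(n,2)` on the periodic
lattice `Λ = (ℤ/Lℤ) × (ℤ/Tℤ)`; the direction `μ ∈ {1,2}` is encoded by `Fin 2` (so `0`
stands for direction `1` and `1` for direction `2`). -/
def plaqAngle (L T : ℕ) (q : (ZMod L × ZMod T) × Fin 2 → ℝ) (n : ZMod L × ZMod T) : ℝ :=
  q (n, 0) + q (n + (1, 0), 1) - q (n + (0, 1), 0) - q (n, 1)

/-- The `U(1)` Wilson gauge action `S_G(q) = β Σ_{n∈Λ} (1 − cos θ(n))`. -/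
noncomputable def gaugeAction (L T : ℕ) [NeZero L] [NeZero T] (β : ℝ)
    (q : (ZMod L × ZMod T) × Fin 2 → ℝ) : ℝ :=
  β * ∑ n : ZMod L × ZMod T, (1 - Real.cos (plaqAngle L T q n))

/-- The pure gauge part of the force-gradient term,
`C_GG(n,μ) = 2 Σ_{m,ν} (∂S_G/∂q(m,ν))·(∂²S_G/∂q(m,ν)∂q(n,μ))`. -/
noncomputable def CGG (L T : ℕ) [NeZero L] [NeZero T] (β : ℝ)
    (q : (ZMod L × ZMod T) × Fin 2 → ℝ) (n : ZMod L × ZMod T) (μ : Fin 2) : ℝ :=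
  2 * ∑ m : ZMod L × ZMod T, ∑ ν : Fin 2,
      fderiv ℝ (gaugeAction L T β) q (Pi.single (m, ν) 1) *
        fderiv ℝ (fun q' => fderiv ℝ (gaugeAction L T β) q' (Pi.single (m, ν) 1)) q
          (Pi.single (n, μ) 1)

set_option linter.unusedSectionVars false

namespace CGGaux

variable (L T : ℕ) [NeZero L] [NeZero T]

noncomputable def ell (k : ZMod L × ZMod T) :
    ((ZMod L × ZMod T) × Fin 2 → ℝ) →L[ℝ] ℝ :=
  letI P : ((ZMod L × ZMod T) × Fin 2) → ((ZMod L × ZMod T) × Fin 2 → ℝ) →L[ℝ] ℝ :=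
    fun i => ContinuousLinearMap.proj i
  P (k, 0) + P (k + (1, 0), 1) - P (k + (0, 1), 0) - P (k, 1)

lemma ell_apply (k : ZMod L × ZMod T) (q : (ZMod L × ZMod T) × Fin 2 → ℝ) :
    ell L T k q = plaqAngle L T q k := by
  simp [ell, plaqAngle, ContinuousLinearMap.sub_apply, ContinuousLinearMap.add_apply]

lemma hasFDerivAt_gauge (β : ℝ) (q : (ZMod L × ZMod T) × Fin 2 → ℝ) :
    HasFDerivAt (gaugeAction L T β)
      (β • ∑ k : ZMod L × ZMod T, Real.sin (plaqAngle L T q k) • ell L T k) q := by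
  have h : ∀ k : ZMod L × ZMod T,
      HasFDerivAt (fun q' => 1 - Real.cos (plaqAngle L T q' k))
        (Real.sin (plaqAngle L T q k) • ell L T k) q := by
    intro k
    have h1 := (((ell L T k).hasFDerivAt (x := q)).cos.const_sub 1)
    simp only [ell_apply] at h1
    refine h1.congr_fderiv ?_
    ext v
    simp
  have hs := HasFDerivAt.fun_sum (u := Finset.univ) (fun k _ => h k)
  exact hs.const_mul β


lemma ell_single0 (k m : ZMod L × ZMod T) :
    ell L T k (Pi.single (m, (0:Fin 2)) 1) =
      (if k = m then (1:ℝ) else 0) - (if k = m - (0,1) then 1 else 0) := by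
  simp [ell, Pi.single_apply, Prod.ext_iff, eq_sub_iff_add_eq]

lemma ell_single1 (k m : ZMod L × ZMod T) :
    ell L T k (Pi.single (m, (1:Fin 2)) 1) =
      (if k = m - (1,0) then (1:ℝ) else 0) - (if k = m then 1 else 0) := by
  simp [ell, Pi.single_apply, Prod.ext_iff, eq_sub_iff_add_eq]

lemma fd0 (β : ℝ) (q : (ZMod L × ZMod T) × Fin 2 → ℝ) (m : ZMod L × ZMod T) :
    fderiv ℝ (gaugeAction L T β) q (Pi.single (m, (0:Fin 2)) 1) =
      β * (Real.sin (plaqAngle L T q m) - Real.sin (plaqAngle L T q (m - (0,1)))) := by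
  rw [(hasFDerivAt_gauge L T β q).fderiv]
  simp [ContinuousLinearMap.sum_apply, ell_single0, mul_sub,
    Finset.sum_sub_distrib, mul_ite, mul_one, mul_zero, Finset.sum_ite_eq']

lemma fd1 (β : ℝ) (q : (ZMod L × ZMod T) × Fin 2 → ℝ) (m : ZMod L × ZMod T) :
    fderiv ℝ (gaugeAction L T β) q (Pi.single (m, (1:Fin 2)) 1) =
      β * (Real.sin (plaqAngle L T q (m - (1,0))) - Real.sin (plaqAngle L T q m)) := by
  rw [(hasFDerivAt_gauge L T β q).fderiv]
  simp [ContinuousLinearMap.sum_apply, ell_single1, mul_sub,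
    Finset.sum_sub_distrib, mul_ite, mul_one, mul_zero, Finset.sum_ite_eq']

lemma fd2_0 (β : ℝ) (q : (ZMod L × ZMod T) × Fin 2 → ℝ) (m n : ZMod L × ZMod T) :
    fderiv ℝ (fun q' => fderiv ℝ (gaugeAction L T β) q' (Pi.single (m, (0:Fin 2)) 1)) q
        (Pi.single (n, (0:Fin 2)) 1) =
      β * (Real.cos (plaqAngle L T q m) *
            ((if m = n then (1:ℝ) else 0) - (if m = n - (0,1) then 1 else 0))
         - Real.cos (plaqAngle L T q (m - (0,1))) *
            ((if m = n + (0,1) then (1:ℝ) else 0) - (if m = n then 1 else 0))) := by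
  have hfun : (fun q' => fderiv ℝ (gaugeAction L T β) q' (Pi.single (m, (0:Fin 2)) 1))
      = fun q' => β * (Real.sin (ell L T m q') - Real.sin (ell L T (m - (0,1)) q')) := by
    funext q'; rw [fd0]; simp [ell_apply]
  rw [hfun]
  have h : HasFDerivAt
      (fun q' => β * (Real.sin (ell L T m q') - Real.sin (ell L T (m - (0,1)) q')))
      (β • (Real.cos (ell L T m q) • ell L T m
        - Real.cos (ell L T (m - (0,1)) q) • ell L T (m - (0,1)))) q :=
    (((ell L T m).hasFDerivAt.sin).sub ((ell L T (m - (0,1))).hasFDerivAt.sin)).const_mul β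
  rw [h.fderiv]
  simp only [ContinuousLinearMap.smul_apply, ContinuousLinearMap.sub_apply, smul_eq_mul,
    ell_single0]
  simp only [ell_apply]
  have h1 : (m - (0,1) = n) ↔ (m = n + (0,1)) := sub_eq_iff_eq_add
  have h2 : (m - (0,1) = n - (0,1)) ↔ (m = n) := sub_left_inj
  rw [if_congr h1 rfl rfl, if_congr h2 rfl rfl]

lemma fd2_1 (β : ℝ) (q : (ZMod L × ZMod T) × Fin 2 → ℝ) (m n : ZMod L × ZMod T) :
    fderiv ℝ (fun q' => fderiv ℝ (gaugeAction L T β) q' (Pi.single (m, (1:Fin 2)) 1)) q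
        (Pi.single (n, (0:Fin 2)) 1) =
      β * (Real.cos (plaqAngle L T q (m - (1,0))) *
            ((if m = n + (1,0) then (1:ℝ) else 0) - (if m = n - (0,1) + (1,0) then 1 else 0))
         - Real.cos (plaqAngle L T q m) *
            ((if m = n then (1:ℝ) else 0) - (if m = n - (0,1) then 1 else 0))) := by
  have hfun : (fun q' => fderiv ℝ (gaugeAction L T β) q' (Pi.single (m, (1:Fin 2)) 1))
      = fun q' => β * (Real.sin (ell L T (m - (1,0)) q') - Real.sin (ell L T m q')) := by
    funext q'; rw [fd1]; simp [ell_apply]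
  rw [hfun]
  have h : HasFDerivAt
      (fun q' => β * (Real.sin (ell L T (m - (1,0)) q') - Real.sin (ell L T m q')))
      (β • (Real.cos (ell L T (m - (1,0)) q) • ell L T (m - (1,0))
        - Real.cos (ell L T m q) • ell L T m)) q :=
    (((ell L T (m - (1,0))).hasFDerivAt.sin).sub ((ell L T m).hasFDerivAt.sin)).const_mul β
  rw [h.fderiv]
  simp only [ContinuousLinearMap.smul_apply, ContinuousLinearMap.sub_apply, smul_eq_mul,
    ell_single0]
  simp only [ell_apply]
  have h1 : (m - (1,0) = n) ↔ (m = n + (1,0)) := sub_eq_iff_eq_add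
  have h2 : (m - (1,0) = n - (0,1)) ↔ (m = n - (0,1) + (1,0)) := sub_eq_iff_eq_add
  rw [if_congr h1 rfl rfl, if_congr h2 rfl rfl]

end CGGaux

/-- Explicit formula for the gauge force-gradient term `C_GG(n,1)` of the two-dimensional
Schwinger model in terms of the plaquette angles at the eight neighbouring plaquettes. -/
theorem CGG_formula (L T : ℕ) [NeZero L] [NeZero T] (hL : 5 ≤ L) (hT : 5 ≤ T) (β : ℝ)
    (q : (ZMod L × ZMod T) × Fin 2 → ℝ) (n : ZMod L × ZMod T) :
    CGG L T β q n 0 =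
      2 * β ^ 2 *
        ((4 * Real.sin (plaqAngle L T q n)
            - Real.sin (plaqAngle L T q (n - (0, 1)))
            - Real.sin (plaqAngle L T q (n + (1, 0)))
            - Real.sin (plaqAngle L T q (n + (0, 1)))
            - Real.sin (plaqAngle L T q (n - (1, 0)))) * Real.cos (plaqAngle L T q n)
          - (4 * Real.sin (plaqAngle L T q (n - (0, 1)))
              - Real.sin (plaqAngle L T q n)
              - Real.sin (plaqAngle L T q (n - (1, 0) - (0, 1)))
              - Real.sin (plaqAngle L T q (n - (0, 2)))
              - Real.sin (plaqAngle L T q (n + (1, 0) - (0, 1))))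
            * Real.cos (plaqAngle L T q (n - (0, 1)))) := by
  have h02 : ((0, 2) : ZMod L × ZMod T) = (0, 1) + (0, 1) := by
    rw [Prod.mk_add_mk]; norm_num
  rw [h02]
  unfold CGG
  simp only [Fin.sum_univ_two, CGGaux.fd2_0 L T, CGGaux.fd2_1 L T]
  simp only [CGGaux.fd0 L T, CGGaux.fd1 L T]
  simp only [mul_sub, sub_mul, mul_add, add_mul, mul_ite, ite_mul, mul_one, mul_zero,
    zero_mul, one_mul, Finset.sum_sub_distrib, Finset.sum_add_distrib, Finset.sum_ite_eq',
    Finset.mem_univ, if_true]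
  simp only [add_sub_cancel_right, sub_add_cancel, add_sub_cancel_left, sub_sub]
  ring_nf
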